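/- arXiv:2601.11370 — 2 statements merged into one kernel-verified Lean document; each statement's English description precedes it below -/
import Mathlib

section
/- Let A be a subset of ℝⁿ and B a subset of ℝᵐ, and suppose h : A → B is a homeomorphism. Let Å denote the interior of A in its closure (and similarly B̊). If the closure of A is compact, then h maps Å into B̊; that is, no point of Å can be sent to a point of B not in the interior of B relative to its closure. -/
/-- If `h : A ≃ₜ B` is a homeomorphism between subsets of Euclidean
spaces and `closure A` is compact, then `h` maps the interior of `A` in `closure A`
into the interior of `B` in `closure B`.  Here the interior of `A` in `closure A`
is expressed as `closure A \ closure (closure A \ A)`. -/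
theorem stmt_0 {n m : ℕ} (A : Set (EuclideanSpace ℝ (Fin n)))
    (B : Set (EuclideanSpace ℝ (Fin m)))
    (h : A ≃ₜ B)
    (hA : IsCompact (closure A)) :
    ∀ x : A, (x : EuclideanSpace ℝ (Fin n)) ∈ closure A \ closure (closure A \ A) →
      (h x : EuclideanSpace ℝ (Fin m)) ∈ closure B \ closure (closure B \ B) := by
  intro x hx
  set U : Set (EuclideanSpace ℝ (Fin n)) := (closure (closure A \ A))ᶜ with hUdef
  have hUopen : IsOpen U := isClosed_closure.isOpen_compl
  have hxU : (x : EuclideanSpace ℝ (Fin n)) ∈ U := hx.2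
  have hUA : U ∩ closure A ⊆ A := by
    intro y hy
    by_contra hyA
    exact hy.1 (subset_closure ⟨hy.2, hyA⟩)
  -- compact neighborhood of x inside U
  obtain ⟨K, hKnhds, hKU, hKcomp⟩ :=
    local_compact_nhds (x := (x : EuclideanSpace ℝ (Fin n))) (hUopen.mem_nhds hxU)
  have hKA : K ∩ closure A ⊆ A := fun y hy => hUA ⟨hKU hy.1, hy.2⟩
  set S : Set A := Subtype.val ⁻¹' K with hSdef
  have hSnhds : S ∈ nhds x := by
    rw [nhds_subtype_eq_comap]
    exact Filter.preimage_mem_comap hKnhds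
  have himg : Subtype.val '' S = K ∩ closure A := by
    rw [hSdef, Subtype.image_preimage_coe]
    apply Set.Subset.antisymm
    · rintro y ⟨hyA, hyK⟩
      exact ⟨hyK, subset_closure hyA⟩
    · intro y hy
      exact ⟨hKA hy, hy.1⟩
  have hScomp : IsCompact S := by
    rw [Subtype.isCompact_iff, himg]
    exact hKcomp.inter_right isClosed_closure
  set T : Set B := h '' S with hTdef
  have hTnhds : T ∈ nhds (h x) := by
    rw [hTdef, ← h.map_nhds_eq]
    exact Filter.image_mem_map hSnhds
  set L : Set (EuclideanSpace ℝ (Fin m)) := Subtype.val '' T with hLdef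
  have hLcomp : IsCompact L := ((hScomp.image h.continuous).image continuous_subtype_val)
  have hLB : L ⊆ B := by rintro y ⟨b, _, rfl⟩; exact b.2
  refine ⟨subset_closure (h x).2, fun hc => ?_⟩
  -- get open set W in ambient space
  rw [nhds_subtype_eq_comap] at hTnhds
  obtain ⟨W, hWnhds, hWT⟩ := hTnhds
  have hOB : interior W ∩ B ⊆ L := by
    rintro y ⟨hyW, hyB⟩
    have hyW' : y ∈ W := interior_subset hyW
    have hmem : (⟨y, hyB⟩ : B) ∈ Subtype.val ⁻¹' W := hyW'
    exact ⟨⟨y, hyB⟩, hWT hmem, rfl⟩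
  have key : interior W ∩ closure B ⊆ B := by
    intro y hy
    have : y ∈ closure (interior W ∩ B) := isOpen_interior.inter_closure hy
    have : y ∈ closure L := closure_mono hOB this
    rw [hLcomp.isClosed.closure_eq] at this
    exact hLB this
  rcases mem_closure_iff.mp hc (interior W) isOpen_interior
      (mem_interior_iff_mem_nhds.mpr hWnhds) with ⟨y, hyW, hyCB, hyB⟩
  exact hyB (key ⟨hyW, hyCB⟩)
end

section
/- Let A be a subset of ℝⁿ and B a subset of ℝᵐ with closure(A) compact, and let h : A → B be a homeomorphism. Then h maps the boundary part A \ Å homeomorphically onto B \ B̊, where Å and B̊ are the interiors of A and B in their respective closures. -/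
open Topology Filter Set

/-- Homeomorphism between a subtype-of-a-subtype and the corresponding set. -/
def subsub {X : Type*} [TopologicalSpace X] (s t : Set X) (hts : t ⊆ s) :
    ↥(Subtype.val ⁻¹' t : Set ↥s) ≃ₜ ↥t := by
  refine Equiv.toHomeomorphOfIsInducing
    (Equiv.subtypeSubtypeEquivSubtype (fun {x} hx => hts hx)) ?_
  refine Topology.IsInducing.of_comp
      (Continuous.subtype_mk (continuous_subtype_val.comp continuous_subtype_val) _)
      continuous_subtype_val ?_
  have h2 : Topology.IsInducing (fun x : ↥(Subtype.val ⁻¹' t : Set ↥s) => (x.1.1 : X)) :=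
    Topology.IsInducing.subtypeVal.comp Topology.IsInducing.subtypeVal
  exact h2

/-- Intrinsic characterization of interior points: for `A` with compact closure in a
locally compact Hausdorff space, `x ∈ A` avoids `closure (closure A \ A)` iff `x` has
a compact neighborhood inside the subspace `A`. -/
lemma interior_point_iff {X : Type*} [TopologicalSpace X] [T2Space X]
    [LocallyCompactSpace X] (A : Set X) (x : X) (hx : x ∈ A) :
    x ∉ closure (closure A \ A) ↔
      ∃ K : Set ↥A, IsCompact K ∧ K ∈ 𝓝 (⟨x, hx⟩ : ↥A) := by
  constructor
  · intro hxc
    set U := (closure (closure A \ A))ᶜ with hUdef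
    have hUo : IsOpen U := isClosed_closure.isOpen_compl
    have hxU : x ∈ U := hxc
    have hU : U ∩ (closure A \ A) = ∅ := by
      apply Set.eq_empty_of_forall_notMem
      rintro y ⟨hyU, hyS⟩
      exact hyU (subset_closure hyS)
    obtain ⟨C, hCcomp, hxC, hCU⟩ := exists_compact_subset hUo hxU
    have hCx : C ∈ 𝓝 x := mem_interior_iff_mem_nhds.mp hxC
    have hKA : C ∩ closure A ⊆ A := by
      rintro y ⟨hyC, hycl⟩
      by_contra hyA
      exact Set.eq_empty_iff_forall_notMem.mp hU y ⟨hCU hyC, hycl, hyA⟩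
    refine ⟨Subtype.val ⁻¹' (C ∩ closure A), ?_, ?_⟩
    · rw [Subtype.isCompact_iff]
      have : Subtype.val '' (Subtype.val ⁻¹' (C ∩ closure A) : Set ↥A) = C ∩ closure A := by
        rw [Subtype.image_preimage_coe]
        exact Set.inter_eq_right.mpr hKA
      rw [this]
      exact (hCcomp.inter_right isClosed_closure)
    · rw [nhds_subtype_eq_comap]
      refine mem_comap.mpr ⟨C, hCx, ?_⟩
      intro y hy
      exact ⟨hy, subset_closure y.2⟩
  · rintro ⟨K, hKcomp, hKnhds⟩ hxc
    -- K' := val '' K is a compact subset of A and a nbhd of x within A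
    have hK' : IsCompact (Subtype.val '' K : Set X) := Subtype.isCompact_iff.mp hKcomp
    have hmem : Subtype.val '' K ∈ 𝓝[A] x := by
      rw [← map_nhds_subtype_val (⟨x, hx⟩ : ↥A)]
      exact image_mem_map hKnhds
    obtain ⟨U, hUo, hxU, hUsub⟩ := mem_nhdsWithin.mp hmem
    obtain ⟨y, hyU, hycl, hyA⟩ : ∃ y, y ∈ U ∧ y ∈ closure A ∧ y ∉ A := by
      rcases mem_closure_iff.mp hxc U hUo hxU with ⟨y, hyU, hy⟩
      exact ⟨y, hyU, hy.1, hy.2⟩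
    -- y ∈ closure (U ∩ A) ⊆ closure (val '' K) = val '' K ⊆ A, contradiction
    have hyc : y ∈ closure (U ∩ A) := by
      rw [mem_closure_iff]
      intro o ho hyo
      rcases mem_closure_iff.mp hycl (o ∩ U) (ho.inter hUo) ⟨hyo, hyU⟩ with ⟨z, ⟨hzo, hzU⟩, hzA⟩
      exact ⟨z, hzo, hzU, hzA⟩
    have : y ∈ Subtype.val '' K :=
      (hK'.isClosed.closure_subset_iff.mpr hUsub) hyc
    rcases this with ⟨z, _, rfl⟩
    exact hyA z.2

/-- a homeomorphism `h : A ≃ₜ B` between subsets of Euclidean spaces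
(with compact closures) maps `A \ Å` homeomorphically onto `B \ B̊`, where
`Å = closure A \ closure (closure A \ A)` is the interior of `A` in `closure A`,
and similarly for `B̊`. -/
theorem stmt_1 {n m : ℕ} (A : Set (EuclideanSpace ℝ (Fin n)))
    (B : Set (EuclideanSpace ℝ (Fin m)))
    (h : A ≃ₜ B)
    (hA : IsCompact (closure A)) (hB : IsCompact (closure B)) :
    (∀ x : A, (x : EuclideanSpace ℝ (Fin n)) ∈
        A \ (closure A \ closure (closure A \ A)) ↔
      (h x : EuclideanSpace ℝ (Fin m)) ∈
        B \ (closure B \ closure (closure B \ B))) ∧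
    Nonempty (((A \ (closure A \ closure (closure A \ A))) :
        Set (EuclideanSpace ℝ (Fin n))) ≃ₜ
      ((B \ (closure B \ closure (closure B \ B))) :
        Set (EuclideanSpace ℝ (Fin m)))) := by
  -- the intrinsic compact-neighborhood property transfers along `h`
  have key : ∀ x : A, (x : EuclideanSpace ℝ (Fin n)) ∈
      A \ (closure A \ closure (closure A \ A)) ↔
      (h x : EuclideanSpace ℝ (Fin m)) ∈
      B \ (closure B \ closure (closure B \ B)) := by
    intro x
    have hx : (x : EuclideanSpace ℝ (Fin n)) ∈ A := x.2
    have hhx : (h x : EuclideanSpace ℝ (Fin m)) ∈ B := (h x).2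
    have h1 : ((x : EuclideanSpace ℝ (Fin n)) ∈
        A \ (closure A \ closure (closure A \ A))) ↔
        (x : EuclideanSpace ℝ (Fin n)) ∈ closure (closure A \ A) := by
      constructor
      · rintro ⟨-, hni⟩
        by_contra hc
        exact hni ⟨subset_closure hx, hc⟩
      · intro hc
        exact ⟨hx, fun hmem => hmem.2 hc⟩
    have h2 : ((h x : EuclideanSpace ℝ (Fin m)) ∈
        B \ (closure B \ closure (closure B \ B))) ↔
        (h x : EuclideanSpace ℝ (Fin m)) ∈ closure (closure B \ B) := by
      constructor
      · rintro ⟨-, hni⟩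
        by_contra hc
        exact hni ⟨subset_closure hhx, hc⟩
      · intro hc
        exact ⟨hhx, fun hmem => hmem.2 hc⟩
    rw [h1, h2]
    rw [← not_iff_not]
    rw [interior_point_iff A _ hx, interior_point_iff B _ hhx]
    constructor
    · rintro ⟨K, hK, hKn⟩
      refine ⟨h '' K, h.isCompact_image.mpr hK, ?_⟩
      have := h.map_nhds_eq x
      rw [show (⟨(h x : EuclideanSpace ℝ (Fin m)), hhx⟩ : ↥B) = h x by rfl, ← this]
      exact image_mem_map (by simpa using hKn)
    · rintro ⟨K, hK, hKn⟩
      refine ⟨h.symm '' K, h.symm.isCompact_image.mpr hK, ?_⟩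
      have := h.symm.map_nhds_eq (h x)
      rw [show (⟨(x : EuclideanSpace ℝ (Fin n)), hx⟩ : ↥A) = x by rfl]
      rw [show x = h.symm (h x) by simp, ← this]
      exact image_mem_map (by simpa using hKn)
  refine ⟨key, ?_⟩
  set SA := A \ (closure A \ closure (closure A \ A)) with hSA
  set SB := B \ (closure B \ closure (closure B \ B)) with hSB
  have hSAA : SA ⊆ A := Set.diff_subset
  have hSBB : SB ⊆ B := Set.diff_subset
  have himg : h '' (Subtype.val ⁻¹' SA) = (Subtype.val ⁻¹' SB : Set ↥B) := by
    ext y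
    constructor
    · rintro ⟨x, hxS, rfl⟩
      exact (key x).mp hxS
    · intro hyS
      refine ⟨h.symm y, ?_, by simp⟩
      have := (key (h.symm y)).mpr
      simp only [Homeomorph.apply_symm_apply] at this
      exact this hyS
  exact ⟨((subsub A SA hSAA).symm.trans
    ((h.image (Subtype.val ⁻¹' SA)).trans
      ((Homeomorph.setCongr himg).trans (subsub B SB hSBB))))⟩
end
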